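/- For every β = (βx, βy) ∈ (0,∞)² and every z = (x,y) ∈ X × Y with f(x) < +∞, the self-centered smoothed gap satisfies G_β(z) ≥ (βx/2)‖x − p‖² + (1/(2βy))‖Ax − b‖², where p = Prox_{βx⁻¹ f}(x − βx⁻¹ Aᵀ y). -/

import Mathlib

open scoped RealInnerProductSpace
open Filter Topology Metric

noncomputable section

variable {X Y : Type*} [NormedAddCommGroup X] [InnerProductSpace ℝ X]
  [NormedAddCommGroup Y] [InnerProductSpace ℝ Y]

/-- The Lagrangian `L(x, y) = f(x) + ⟪A x − b, y⟫`. -/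
def Lag (f : X → EReal) (A : X →L[ℝ] Y) (b : Y) (x : X) (y : Y) : EReal :=
  f x + ((⟪A x - b, y⟫ : ℝ) : EReal)

/-- The smoothed duality gap `G_β((x, y); (xd, yd))`, valued in `ℝ ∪ {+∞}` (here `EReal`;
the inner expression is `−∞` exactly when `f x' = +∞`, so such `x'` do not contribute). -/
def smoothedGap (f : X → EReal) (A : X →L[ℝ] Y) (b : Y) (βx βy : ℝ)
    (x : X) (y : Y) (xd : X) (yd : Y) : EReal :=
  ⨆ w : X × Y,
    (Lag f A b x w.2 - Lag f A b w.1 y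
      - ((βx / 2 * ‖w.1 - xd‖ ^ 2 + βy / 2 * ‖w.2 - yd‖ ^ 2 : ℝ) : EReal))

/-- `f` is proper: never `−∞` and not identically `+∞`. -/
def EProper (f : X → EReal) : Prop := (∀ u, f u ≠ ⊥) ∧ ∃ u, f u ≠ ⊤

/-- Convexity for an `EReal`-valued function. -/
def EConvexOn (f : X → EReal) : Prop :=
  ∀ u v : X, ∀ t : ℝ, 0 ≤ t → t ≤ 1 →
    f (t • u + (1 - t) • v) ≤ (t : EReal) * f u + ((1 - t : ℝ) : EReal) * f v

/-- The subdifferential `∂f(x) = {q | ∀ u, f(u) ≥ f(x) + ⟪q, u − x⟫}`. -/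
def ESubdiff (f : X → EReal) (x : X) : Set X :=
  {q | ∀ u : X, f x + ((⟪q, u - x⟫ : ℝ) : EReal) ≤ f u}

/-- `p = Prox_{s f}(v)`: `p` is the (unique) minimizer of `f(·) + (1/(2s))‖· − v‖²`. -/
def IsProx (f : X → EReal) (s : ℝ) (v p : X) : Prop :=
  ∀ u : X, f p + ((1 / (2 * s) * ‖p - v‖ ^ 2 : ℝ) : EReal)
    ≤ f u + ((1 / (2 * s) * ‖u - v‖ ^ 2 : ℝ) : EReal)

/-- The Fenchel–Legendre conjugate `f*(φ) = sup_u (⟪φ, u⟫ − f(u))`. -/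
def fenchel (f : X → EReal) (φ : X) : EReal := ⨆ u : X, (((⟪φ, u⟫ : ℝ) : EReal) - f u)

/-- The domain of the Fenchel conjugate. -/
def fdom (f : X → EReal) : Set X := {φ | fenchel f φ ≠ ⊤}

/-- `a = Proj_S(v)`: `a` is the (unique, for `S` closed convex nonempty) Euclidean
projection of `v` onto `S`. -/
def IsProj (S : Set X) (v a : X) : Prop := a ∈ S ∧ ∀ u ∈ S, ‖a - v‖ ≤ ‖u - v‖

/-- `(xs, ys)` is a saddle point of the Lagrangian. -/
def IsSaddle (f : X → EReal) (A : X →L[ℝ] Y) (b : Y) (xs : X) (ys : Y) : Prop :=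
  ∀ (x' : X) (y' : Y), Lag f A b xs y' ≤ Lag f A b xs ys ∧ Lag f A b xs ys ≤ Lag f A b x' ys

/-- The set of saddle points `Z⋆`. -/
def saddleSet (f : X → EReal) (A : X →L[ℝ] Y) (b : Y) : Set (X × Y) :=
  {zs | IsSaddle f A b zs.1 zs.2}

/-- Euclidean distance from a point of `X × Y` to a set. -/
def distZ (z : X × Y) (S : Set (X × Y)) : ℝ :=
  ⨅ w : S, Real.sqrt (‖z.1 - (w : X × Y).1‖ ^ 2 + ‖z.2 - (w : X × Y).2‖ ^ 2)

/-- The projected duality gap `D(z)`, where `fx = f(x)` and `fa = f*(a)` (both finite). -/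
def PDG (fx fa : ℝ) (A : X →L[ℝ] Y) (At : Y →L[ℝ] X) (b : Y) (a x : X) (y : Y) : ℝ :=
  |fx + fa + ⟪b, y⟫| ^ 2 + ‖a + At y‖ ^ 2 + ‖A x - b‖ ^ 2

set_option maxHeartbeats 1000000

/-- lower bound on the self-centered smoothed gap.
`G_β(z) ≥ (βx/2)‖x − p‖² + (1/(2βy))‖Ax − b‖²`, where
`p = Prox_{βx⁻¹ f}(x − βx⁻¹ Aᵀ y)`. -/
theorem smoothedGap_lower_bound
    [FiniteDimensional ℝ X] [FiniteDimensional ℝ Y]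
    (f : X → EReal) (A : X →L[ℝ] Y) (At : Y →L[ℝ] X) (b : Y)
    (hf_proper : EProper f) (hf_lsc : LowerSemicontinuous f) (hf_conv : EConvexOn f)
    (hAt : ∀ (u : X) (v : Y), ⟪A u, v⟫ = ⟪u, At v⟫)
    (βx βy : ℝ) (hβx : 0 < βx) (hβy : 0 < βy)
    (x : X) (y : Y) (hfx : f x < ⊤)
    (p : X) (hp : IsProx f βx⁻¹ (x - βx⁻¹ • At y) p) :
    ((βx / 2 * ‖x - p‖ ^ 2 + 1 / (2 * βy) * ‖A x - b‖ ^ 2 : ℝ) : EReal)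
      ≤ smoothedGap f A b βx βy x y x y := by
  classical
  set v : X := x - βx⁻¹ • At y with hv
  have hbot := hf_proper.1
  -- f x is finite
  set fx : ℝ := (f x).toReal with hfxdef
  have hfx_eq : ((fx : ℝ) : EReal) = f x := EReal.coe_toReal hfx.ne (hbot x)
  -- f p is finite
  have hfp_top : f p ≠ ⊤ := by
    intro h
    have := hp x
    rw [h] at this
    rw [EReal.top_add_coe] at this
    rw [← hfx_eq] at this
    exact not_le.mpr (EReal.coe_lt_top _) (EReal.coe_add fx _ ▸ this : (⊤:EReal) ≤ _)
  set fp : ℝ := (f p).toReal with hfpdef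
  have hfp_eq : ((fp : ℝ) : EReal) = f p := EReal.coe_toReal hfp_top (hbot p)
  have hc : (1 : ℝ) / (2 * βx⁻¹) = βx / 2 := by
    field_simp
  -- key inequality for each t
  have key : ∀ t : ℝ, 0 < t → t ≤ 1 →
      0 ≤ (fx - fp) + βx * ⟪p - v, x - p⟫ + (βx/2) * t * ‖x - p‖^2 := by
    intro t ht ht1
    set ut : X := t • x + (1 - t) • p with hut
    have h1 : f ut ≤ ((t * fx + (1 - t) * fp : ℝ) : EReal) := by
      have := hf_conv x p t ht.le ht1
      rw [← hfx_eq, ← hfp_eq] at this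
      calc f ut ≤ (t : EReal) * (fx:EReal) + ((1 - t : ℝ) : EReal) * (fp:EReal) := this
        _ = ((t * fx + (1 - t) * fp : ℝ) : EReal) := by
            rw [← EReal.coe_mul, ← EReal.coe_mul, ← EReal.coe_add]
    have h2 := hp ut
    rw [← hfp_eq] at h2
    have h3 : ((fp + 1 / (2 * βx⁻¹) * ‖p - v‖ ^ 2 : ℝ) : EReal)
        ≤ ((t * fx + (1 - t) * fp + 1 / (2 * βx⁻¹) * ‖ut - v‖ ^ 2 : ℝ) : EReal) := by
      rw [EReal.coe_add fp, EReal.coe_add (t * fx + (1 - t) * fp)]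
      calc ((fp:ℝ):EReal) + ((1 / (2 * βx⁻¹) * ‖p - v‖ ^ 2 : ℝ) : EReal)
          ≤ f ut + ((1 / (2 * βx⁻¹) * ‖ut - v‖ ^ 2 : ℝ) : EReal) := h2
        _ ≤ ((t * fx + (1 - t) * fp : ℝ) : EReal) + ((1 / (2 * βx⁻¹) * ‖ut - v‖ ^ 2 : ℝ) : EReal) :=
            add_le_add_left h1 _
    have h4 : fp + 1 / (2 * βx⁻¹) * ‖p - v‖ ^ 2
        ≤ t * fx + (1 - t) * fp + 1 / (2 * βx⁻¹) * ‖ut - v‖ ^ 2 :=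
      EReal.coe_le_coe_iff.mp h3
    have hexp : ut - v = (p - v) + t • (x - p) := by
      rw [hut]; module
    have hnorm : ‖ut - v‖ ^ 2 = ‖p - v‖^2 + 2 * (t * ⟪p - v, x - p⟫) + t^2 * ‖x - p‖^2 := by
      rw [hexp, norm_add_sq_real, real_inner_smul_right, norm_smul, Real.norm_eq_abs,
        abs_of_pos ht, mul_pow]
    rw [hc] at h4
    rw [hnorm] at h4
    have h5 : 0 ≤ t * (fx - fp) + βx * t * ⟪p - v, x - p⟫ + (βx/2) * t^2 * ‖x - p‖^2 := by
      nlinarith [h4]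
    nlinarith [h5, ht]
  -- pass to the limit t → 0
  have hK : 0 ≤ (fx - fp) + βx * ⟪p - v, x - p⟫ := by
    by_contra h
    push_neg at h
    set K : ℝ := (fx - fp) + βx * ⟪p - v, x - p⟫ with hKdef
    set D : ℝ := (βx/2) * ‖x - p‖^2 with hD
    have hD0 : 0 ≤ D := by positivity
    set t : ℝ := min 1 ((-K/2) / (D + 1)) with htdef
    have hKneg : 0 < -K := by linarith
    have ht : 0 < t := lt_min one_pos (by positivity)
    have ht1 : t ≤ 1 := min_le_left _ _
    have := key t ht ht1
    have htD : t * D ≤ -K/2 := by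
      have h1 : t ≤ (-K/2) / (D + 1) := min_le_right _ _
      have h2 : t * D ≤ ((-K/2) / (D + 1)) * D := by nlinarith
      have h3 : ((-K/2) / (D + 1)) * D ≤ -K/2 := by
        rw [div_mul_eq_mul_div, div_le_iff₀ (by linarith)]
        nlinarith
      linarith
    have : (βx/2) * t * ‖x - p‖^2 = t * D := by rw [hD]; ring
    nlinarith [key t ht ht1, htD]
  -- the strong prox inequality
  have hK' : βx * ‖x - p‖^2 ≤ (fx - fp) + ⟪At y, x - p⟫ := by
    have hpv : p - v = (p - x) + βx⁻¹ • At y := by rw [hv]; module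
    have : ⟪p - v, x - p⟫ = -‖x - p‖^2 + βx⁻¹ * ⟪At y, x - p⟫ := by
      rw [hpv, inner_add_left, real_inner_smul_left]
      have : ⟪p - x, x - p⟫ = -‖x - p‖^2 := by
        rw [show p - x = -(x - p) from (neg_sub x p).symm, inner_neg_left,
          real_inner_self_eq_norm_sq]
      linarith [this]
    rw [this] at hK
    have hexp : βx * (-‖x - p‖^2 + βx⁻¹ * ⟪At y, x - p⟫)
        = -(βx * ‖x - p‖^2) + ⟪At y, x - p⟫ := by
      field_simp
    rw [hexp] at hK
    linarith
  -- plug in the specific dual point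
  refine le_trans ?_ (le_iSup _ (p, y + βy⁻¹ • (A x - b)))
  simp only [Lag]
  rw [← hfx_eq, ← hfp_eq]
  have hrw : ((fx:ℝ):EReal) + ((⟪A x - b, y + βy⁻¹ • (A x - b)⟫ : ℝ) : EReal)
      - (((fp:ℝ):EReal) + ((⟪A p - b, y⟫ : ℝ) : EReal))
      - ((βx / 2 * ‖(p, y + βy⁻¹ • (A x - b)).1 - x‖ ^ 2
          + βy / 2 * ‖(p, y + βy⁻¹ • (A x - b)).2 - y‖ ^ 2 : ℝ) : EReal)
      = ((fx + ⟪A x - b, y + βy⁻¹ • (A x - b)⟫ - (fp + ⟪A p - b, y⟫)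
          - (βx / 2 * ‖p - x‖ ^ 2
            + βy / 2 * ‖(y + βy⁻¹ • (A x - b)) - y‖ ^ 2) : ℝ) : EReal) := by
    norm_cast
  rw [hrw]
  rw [EReal.coe_le_coe_iff]
  have e1 : ⟪A x - b, y + βy⁻¹ • (A x - b)⟫ = ⟪A x - b, y⟫ + βy⁻¹ * ‖A x - b‖^2 := by
    rw [inner_add_right, real_inner_smul_right, real_inner_self_eq_norm_sq]
  have e2 : ‖(y + βy⁻¹ • (A x - b)) - y‖ ^ 2 = βy⁻¹^2 * ‖A x - b‖^2 := by
    rw [show (y + βy⁻¹ • (A x - b)) - y = βy⁻¹ • (A x - b) by module, norm_smul,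
      Real.norm_eq_abs, abs_of_pos (by positivity), mul_pow]
  have e3 : ⟪A x - b, y⟫ - ⟪A p - b, y⟫ = ⟪At y, x - p⟫ := by
    have : ⟪A x - b, y⟫ - ⟪A p - b, y⟫ = ⟪A (x - p), y⟫ := by
      rw [map_sub, inner_sub_left, inner_sub_left, inner_sub_left]; ring
    rw [this, hAt, real_inner_comm]
  have e4 : ‖p - x‖ = ‖x - p‖ := norm_sub_rev _ _
  have hβy1 : βy⁻¹ - βy/2 * βy⁻¹^2 = 1/(2*βy) := by field_simp; ring
  rw [e1, e2, e4]
  nlinarith [hK', e3, hβy1]
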